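/- Let ρ be a positive semidefinite 4×4 Hermitian matrix of the Choi form with entries determined by parameters s₁, s₂, s₃, t₁₁, t₂₂, t₃₃ as in the canonical Choi matrix (diagonal (1±s₃±t₃₃)/4, off-diagonal entries (s₁∓is₂)/4 and (t₁₁±t₂₂)/4). If rank ρ = 2, then s₃(t₃₃ + t₁₁t₂₂) = 0, s₂(t₂₂ + t₁₁t₃₃) = 0, and s₁(t₁₁ + t₂₂t₃₃) = 0. -/

import Mathlib

open Matrix Complex ComplexOrder

noncomputable section

/-- The canonical Choi matrix with parameters s₁, s₂, s₃, t₁₁, t₂₂, t₃₃. -/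
def choiMat (s₁ s₂ s₃ t₁₁ t₂₂ t₃₃ : ℝ) : Matrix (Fin 4) (Fin 4) ℂ :=
  (4 : ℂ)⁻¹ •
    !![1 + (s₃ : ℂ) + (t₃₃ : ℂ), (s₁ : ℂ) - (s₂ : ℂ) * Complex.I, 0, (t₁₁ : ℂ) - (t₂₂ : ℂ);
       (s₁ : ℂ) + (s₂ : ℂ) * Complex.I, 1 - (s₃ : ℂ) - (t₃₃ : ℂ), (t₁₁ : ℂ) + (t₂₂ : ℂ), 0;
       0, (t₁₁ : ℂ) + (t₂₂ : ℂ), 1 + (s₃ : ℂ) - (t₃₃ : ℂ), (s₁ : ℂ) - (s₂ : ℂ) * Complex.I;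
       (t₁₁ : ℂ) - (t₂₂ : ℂ), 0, (s₁ : ℂ) + (s₂ : ℂ) * Complex.I, 1 - (s₃ : ℂ) + (t₃₃ : ℂ)]

set_option maxHeartbeats 1000000 in
/-- Any submatrix (arbitrary row/column selections) has rank at most the rank
of the original matrix. -/
lemma gen_submatrix_rank_le (A : Matrix (Fin 4) (Fin 4) ℂ) (f g : Fin 3 → Fin 4) :
    (A.submatrix f g).rank ≤ A.rank := by
  have h1 : A.submatrix f g =
      ((1 : Matrix (Fin 4) (Fin 4) ℂ).submatrix f (Equiv.refl (Fin 4))) * A *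
      ((1 : Matrix (Fin 4) (Fin 4) ℂ).submatrix (Equiv.refl (Fin 4)) g) := by
    rw [Matrix.mul_submatrix_one (Equiv.refl (Fin 4)) g,
      Matrix.one_submatrix_mul f (Equiv.refl (Fin 4))]
    ext i j
    simp [Matrix.submatrix_apply]
  calc (A.submatrix f g).rank
      = (((1 : Matrix (Fin 4) (Fin 4) ℂ).submatrix f (Equiv.refl (Fin 4))) * A *
      ((1 : Matrix (Fin 4) (Fin 4) ℂ).submatrix (Equiv.refl (Fin 4)) g)).rank := by rw [h1]
    _ ≤ (((1 : Matrix (Fin 4) (Fin 4) ℂ).submatrix f (Equiv.refl (Fin 4))) * A).rank :=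
        Matrix.rank_mul_le_left _ _
    _ ≤ A.rank := Matrix.rank_mul_le_right _ _

/-- If a 4×4 matrix has rank 2, every 3×3 minor vanishes. -/
lemma minor_zero {A : Matrix (Fin 4) (Fin 4) ℂ} (h : A.rank = 2) (f g : Fin 3 → Fin 4) :
    (A.submatrix f g).det = 0 := by
  by_contra hd
  have h3 := Matrix.rank_of_isUnit (A.submatrix f g)
    ((Matrix.isUnit_iff_isUnit_det _).mpr (isUnit_iff_ne_zero.mpr hd))
  simp only [Fintype.card_fin] at h3
  have := gen_submatrix_rank_le A f g
  omega

/-- If a positive semidefinite Choi matrix has rank two, then the parameters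
satisfy the three compatibility relations. -/
theorem stmt_16 (s₁ s₂ s₃ t₁₁ t₂₂ t₃₃ : ℝ)
    (hpsd : (choiMat s₁ s₂ s₃ t₁₁ t₂₂ t₃₃).PosSemidef)
    (hrank : (choiMat s₁ s₂ s₃ t₁₁ t₂₂ t₃₃).rank = 2) :
    s₃ * (t₃₃ + t₁₁ * t₂₂) = 0 ∧
    s₂ * (t₂₂ + t₁₁ * t₃₃) = 0 ∧
    s₁ * (t₁₁ + t₂₂ * t₃₃) = 0 := by
  have hA := minor_zero hrank ![0,2,3] ![0,1,2]
  have hA' := minor_zero hrank ![0,1,2] ![0,2,3]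
  have hB := minor_zero hrank ![0,1,3] ![1,2,3]
  have hB' := minor_zero hrank ![1,2,3] ![0,1,3]
  have h1 := minor_zero hrank ![0,1,2] ![0,1,2]
  have h2 := minor_zero hrank ![0,1,3] ![0,1,3]
  have h3 := minor_zero hrank ![0,2,3] ![0,2,3]
  have h4 := minor_zero hrank ![1,2,3] ![1,2,3]
  rw [Matrix.det_fin_three] at hA hA' hB hB' h1 h2 h3 h4
  simp [choiMat, Matrix.det_fin_three, Matrix.submatrix_apply] at hA hA' hB hB' h1 h2 h3 h4
  refine ⟨?_, ?_, ?_⟩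
  · have hc : (s₃ : ℂ) * (t₃₃ + t₁₁ * t₂₂) = 0 := by
      linear_combination (-8 : ℂ) * (h1 + h2 - h3 - h4)
    exact_mod_cast hc
  · have hc : (s₂ : ℂ) * (t₂₂ + t₁₁ * t₃₃) = 0 := by
      linear_combination (-8 * Complex.I) * (hA - hA' + hB' - hB) + ((s₂:ℂ) * t₂₂ + (s₂:ℂ) * t₁₁ * t₃₃) * Complex.I_mul_I
    exact_mod_cast hc
  · have hc : (s₁ : ℂ) * (t₁₁ + t₂₂ * t₃₃) = 0 := by
      linear_combination (8 : ℂ) * (hA + hA' + hB + hB')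
    exact_mod_cast hc

end
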